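/- Let M be a countable structure satisfying Hypothesis (H), let L be a finite group, and let H ∈ PS(M). Then the following are equivalent: (1) H = G_(K) for some K ∈ A(M) with Aut(K) ≅ L; (2) there is H' ∈ GS(M) such that H ⊴ H', [H' : H] < ω, H' is maximal among subgroups in GS(M) with these two properties, and H'/H ≅ L. -/

import Mathlib

open FirstOrder

namespace Paper

variable (L : FirstOrder.Language) (M : Type*) [L.Structure M]

/-- The group of automorphisms of a first-order structure, with composition. -/
instance autGroup : Group (M ≃[L] M) where
  one := FirstOrder.Language.Equiv.refl L M
  mul f g := f.comp g
  inv := FirstOrder.Language.Equiv.symm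
  mul_assoc _ _ _ := rfl
  one_mul f := FirstOrder.Language.Equiv.ext fun a => by
    show (FirstOrder.Language.Equiv.refl L M).comp f a = f a; simp
  mul_one f := FirstOrder.Language.Equiv.ext fun a => by
    show f.comp (FirstOrder.Language.Equiv.refl L M) a = f a; simp
  inv_mul_cancel f := FirstOrder.Language.Equiv.ext fun a => by
    show f.symm.comp f a = FirstOrder.Language.Equiv.refl L M a; simp

@[simp] theorem aut_one_apply (a : M) : (1 : M ≃[L] M) a = a := by
  show FirstOrder.Language.Equiv.refl L M a = a; simp
@[simp] theorem aut_mul_apply (f g : M ≃[L] M) (a : M) : (f * g) a = f (g a) := rfl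
@[simp] theorem aut_inv_apply (f : M ≃[L] M) (a : M) : f⁻¹ a = f.symm a := rfl
@[simp] theorem aut_coe_mul (f g : M ≃[L] M) : ⇑(f * g) = ⇑f ∘ ⇑g := rfl

/-- The natural action of the automorphism group on the structure. -/
instance autAction : MulAction (M ≃[L] M) M where
  smul f a := f a
  one_smul _ := rfl
  mul_smul _ _ _ := rfl

@[simp] theorem aut_smul_def (f : M ≃[L] M) (a : M) : f • a = f a := rfl

/-- The topology of pointwise convergence on the automorphism group (the domain
being regarded as discrete). -/
instance autTopology : TopologicalSpace (M ≃[L] M) :=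
  letI : TopologicalSpace M := ⊥
  TopologicalSpace.induced (fun g => (g : M → M)) Pi.topologicalSpace

/-- The pointwise stabilizer `G_(A)` of a set `A ⊆ M` in `Aut(M)`. -/
def pstab (A : Set M) : Subgroup (M ≃[L] M) where
  carrier := {g | ∀ a ∈ A, g a = a}
  one_mem' := fun _ _ => rfl
  mul_mem' := by
    intro f g hf hg a ha
    simp only [Set.mem_setOf_eq] at *
    rw [aut_mul_apply, hg a ha, hf a ha]
  inv_mem' := by
    intro f hf a ha
    simp only [Set.mem_setOf_eq] at *
    rw [aut_inv_apply]
    conv_lhs => rw [← hf a ha]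
    exact f.symm_apply_apply a

/-- The setwise stabilizer `G_{A}` of a set `A ⊆ M` in `Aut(M)`. -/
def sstab (A : Set M) : Subgroup (M ≃[L] M) where
  carrier := {g | g '' A = A}
  one_mem' := by
    simp only [Set.mem_setOf_eq]
    ext a; simp [Set.mem_image]
  mul_mem' := by
    intro f g hf hg
    simp only [Set.mem_setOf_eq] at *
    rw [aut_coe_mul, Set.image_comp, hg, hf]
  inv_mem' := by
    intro f hf
    simp only [Set.mem_setOf_eq] at *
    conv_lhs => rw [← hf]
    rw [Set.image_image]
    ext a; constructor
    · rintro ⟨x, hx, rfl⟩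
      simpa [f.symm_apply_apply] using hx
    · intro ha
      exact ⟨a, ha, f.symm_apply_apply a⟩

/-- The Galois-algebraic closure of `A ⊆ M`: the set of elements with finite orbit
under the pointwise stabilizer of `A`. -/
def aclg (A : Set M) : Set M :=
  {b | (MulAction.orbit (pstab L M A) b).Finite}

/-- The Galois-definable closure of the empty set: elements fixed by every automorphism. -/
def dclg0 : Set M := {b | ∀ g : M ≃[L] M, g b = b}

/-- `p : K ≃ K'` is an isomorphism between the induced substructures on `K` and `K'`. -/
def IsPartialIso (K K' : Set M) (p : K ≃ K') : Prop :=
  (∀ {n : ℕ} (f : L.Functions n) (x : Fin n → K),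
      ∃ h : FirstOrder.Language.Structure.funMap f (fun i => (x i : M)) ∈ K,
        (p ⟨FirstOrder.Language.Structure.funMap f (fun i => (x i : M)), h⟩ : M) =
          FirstOrder.Language.Structure.funMap f (fun i => (p (x i) : M))) ∧
  (∀ {n : ℕ} (r : L.Relations n) (x : Fin n → K),
      FirstOrder.Language.Structure.RelMap r (fun i => (x i : M)) ↔
        FirstOrder.Language.Structure.RelMap r (fun i => (p (x i) : M)))

/-- `A(M)`: the collection of Galois-algebraic closures of finite subsets of `M`. -/
def AA : Set (Set M) := {K | ∃ A : Set M, A.Finite ∧ K = aclg L M A}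

/-- Hypothesis (H). -/
structure HypH : Prop where
  countable : Countable M
  locallyFinite : ∀ A : Set M, A.Finite → (aclg L M A).Finite
  extendsIso : ∀ (K K' : Set M), K.Finite → K'.Finite →
    aclg L M K = K → aclg L M K' = K' → ∀ p : K ≃ K', IsPartialIso L M K K' p →
      ∃ g : M ≃[L] M, ∀ a : K, g a = (p a : M)
  openSandwich : ∀ H : Subgroup (M ≃[L] M), IsOpen (H : Set (M ≃[L] M)) →
    ∃! K : Set M, K.Finite ∧ aclg L M K = K ∧ pstab L M K ≤ H ∧ H ≤ sstab L M K


/-- Generalized pointwise stabilizer `G_(K,L)`. -/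
def genStab (K : Set M) (Lsub : Subgroup (Equiv.Perm K)) : Subgroup (M ≃[L] M) where
  carrier := {f | ∃ p ∈ Lsub, ∀ a : K, f a = (p a : M)}
  one_mem' := ⟨1, Lsub.one_mem, fun a => by simp⟩
  mul_mem' := by
    rintro f g ⟨p, hp, hfp⟩ ⟨q, hq, hgq⟩
    refine ⟨p * q, Lsub.mul_mem hp hq, fun a => ?_⟩
    rw [aut_mul_apply, hgq a, hfp (q a)]
    rfl
  inv_mem' := by
    rintro f ⟨p, hp, hfp⟩
    refine ⟨p⁻¹, Lsub.inv_mem hp, fun a => ?_⟩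
    have h1 : f ((p⁻¹ a : K) : M) = ((p (p⁻¹ a) : K) : M) := hfp _
    rw [show p (p⁻¹ a) = a from Equiv.Perm.eq_inv_iff_eq.mp rfl] at h1
    rw [aut_inv_apply, ← h1, FirstOrder.Language.Equiv.symm_apply_apply]

/-- `GS(M)`: the collection of generalized pointwise stabilizers. -/
def GS : Set (Subgroup (M ≃[L] M)) :=
  {H | ∃ K ∈ AA L M, ∃ Lsub : Subgroup (Equiv.Perm K),
    (∀ p ∈ Lsub, IsPartialIso L M K K (p : K ≃ K)) ∧ H = genStab L M K Lsub}

/-- `PS(M)`: the collection of pointwise stabilizers of members of `A(M)`. -/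
def PS : Set (Subgroup (M ≃[L] M)) := {H | ∃ K ∈ AA L M, H = pstab L M K}

/-- The lattice `A₊(M)`. -/
def Aplus : Set (Set M) := AA L M ∪ {dclg0 L M}

/-- Covering relation in `S`. -/
def hasseCovers {α : Type*} (S : Set (Set α)) (A B : Set α) : Prop :=
  A ∈ S ∧ B ∈ S ∧ A ⊂ B ∧ ¬∃ C ∈ S, A ⊂ C ∧ C ⊂ B

/-- Adjacency in the Hasse diagram of `S`. -/
def hasseAdj {α : Type*} (S : Set (Set α)) (A B : Set α) : Prop :=
  hasseCovers S A B ∨ hasseCovers S B A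

/-- `A_k(M)`: members of `A(M)` distinct from `dcl(∅)` at distance `≤ k` from the bottom
of the lattice `A₊(M)` in its Hasse diagram. -/
def Ak (k : ℕ) : Set (Set M) :=
  {K | K ∈ AA L M ∧ K ≠ dclg0 L M ∧ ∃ (j : ℕ) (c : Fin (j + 1) → Set M), j ≤ k ∧
    c 0 = dclg0 L M ∧ c (Fin.last j) = K ∧
    ∀ i : Fin j, hasseAdj (Aplus L M) (c i.castSucc) (c i.succ)}

/-- `A_k(M)` for `k ≤ ω`, with `A_ω(M) = A(M)`. -/
def AkE (k : ℕ∞) : Set (Set M) :=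
  match k with
  | ⊤ => AA L M
  | (k : ℕ) => Ak L M k

/-- `k_M`: the supremum of lengths of strict chains of Galois-algebraic closures of
singletons. -/
noncomputable def kM : ℕ∞ :=
  ⨆ k ∈ {k : ℕ | ∃ a : Fin k → M, ∀ i j : Fin k, i < j → aclg L M {a i} ⊂ aclg L M {a j}},
    (k : ℕ∞)

/-- The domain of the expanded structure `E^ex_M(k)`: triples `(K, p, K')` with
`K, K' ∈ A_k(M)` and `p : K ≅ K'`. -/
structure ExTriple (k : ℕ∞) where
  K : Set M
  K' : Set M
  hK : K ∈ AkE L M k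
  hK' : K' ∈ AkE L M k
  p : K ≃ K'
  iso : IsPartialIso L M K K' p

/-- The unary predicate of `E^ex_M(k)` holding of the identity triples. -/
def IsIdTriple {k : ℕ∞} (t : ExTriple L M k) : Prop :=
  t.K = t.K' ∧ ∀ a : t.K, (t.p a : M) = (a : M)

/-- The `n`-ary relation `E_n` of `E^ex_M(k)`. -/
def ERel {k : ℕ∞} {n : ℕ} (x : Fin n → ExTriple L M k) : Prop :=
  ∃ g : M ≃[L] M, ∀ (i : Fin n) (a : (x i).K), g a = ((x i).p a : M)

/-- The binary relation `Dom` of `E^ex_M(k)`. -/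
def DomRel {k : ℕ∞} (t s : ExTriple L M k) : Prop := IsIdTriple L M s ∧ s.K = t.K

/-- The binary relation `Cod` of `E^ex_M(k)`. -/
def CodRel {k : ℕ∞} (t s : ExTriple L M k) : Prop := IsIdTriple L M s ∧ s.K = t.K'

variable {L M}

/-- A bijection between the domains of `E^ex_M(k)` and `E^ex_N(k)` is an isomorphism
if it preserves the identity-triple predicate, all the relations `E_n`, `Dom` and `Cod`. -/
def IsExIso {L' : FirstOrder.Language} {N : Type*} [L'.Structure N] {k : ℕ∞}
    (F : ExTriple L M k ≃ ExTriple L' N k) : Prop :=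
  (∀ t, IsIdTriple L M t ↔ IsIdTriple L' N (F t)) ∧
  (∀ (n : ℕ) (x : Fin n → ExTriple L M k), ERel L M x ↔ ERel L' N (F ∘ x)) ∧
  (∀ t s, DomRel L M t s ↔ DomRel L' N (F t) (F s)) ∧
  (∀ t s, CodRel L M t s ↔ CodRel L' N (F t) (F s))

variable (L M)

/-- The automorphism group of the expanded structure `E^ex_M(k)`. -/
def exAut (k : ℕ∞) : Subgroup (Equiv.Perm (ExTriple L M k)) where
  carrier := {σ | IsExIso (σ : ExTriple L M k ≃ ExTriple L M k)}
  one_mem' := by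
    refine ⟨fun t => ?_, fun n x => ?_, fun t s => ?_, fun t s => ?_⟩ <;>
      simp [Equiv.Perm.coe_one, Function.comp_def]
  mul_mem' := by
    rintro σ τ ⟨hσ1, hσ2, hσ3, hσ4⟩ ⟨hτ1, hτ2, hτ3, hτ4⟩
    refine ⟨fun t => ?_, fun n x => ?_, fun t s => ?_, fun t s => ?_⟩
    · exact (hτ1 t).trans (hσ1 (τ t))
    · exact (hτ2 n x).trans (hσ2 n (τ ∘ x))
    · exact (hτ3 t s).trans (hσ3 (τ t) (τ s))
    · exact (hτ4 t s).trans (hσ4 (τ t) (τ s))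
  inv_mem' := by
    rintro σ ⟨hσ1, hσ2, hσ3, hσ4⟩
    refine ⟨fun t => ?_, fun n x => ?_, fun t s => ?_, fun t s => ?_⟩
    · have := hσ1 (σ⁻¹ t); simpa using this.symm
    · have := hσ2 n (⇑(σ⁻¹) ∘ x)
      have hx : ⇑σ ∘ ⇑(σ⁻¹) ∘ x = x := by
        funext i; simp
      rw [hx] at this
      exact this.symm
    · have := hσ3 (σ⁻¹ t) (σ⁻¹ s); simpa using this.symm
    · have := hσ4 (σ⁻¹ t) (σ⁻¹ s); simpa using this.symm

/-- The subgroup of topological automorphisms of a topological group. -/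
def topMulAut (G : Type*) [Group G] [TopologicalSpace G] : Subgroup (MulAut G) where
  carrier := {α | Continuous (α : G → G) ∧ Continuous (α.symm : G → G)}
  one_mem' := ⟨continuous_id, continuous_id⟩
  mul_mem' := by
    rintro α β ⟨hα1, hα2⟩ ⟨hβ1, hβ2⟩
    exact ⟨hα1.comp hβ1, hβ2.comp hα2⟩
  inv_mem' := by
    rintro α ⟨h1, h2⟩
    exact ⟨h2, h1⟩

/-- A group isomorphism between topological groups which is a homeomorphism. -/
def IsTopIso {G H : Type*} [Group G] [Group H] [TopologicalSpace G] [TopologicalSpace H]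
    (e : G ≃* H) : Prop :=
  Continuous (e : G → H) ∧ Continuous (e.symm : H → G)

/-- The natural homomorphism from `Aut(M)` to the symmetric group on `M`. -/
def toPerm : (M ≃[L] M) →* Equiv.Perm M where
  toFun g := g.toEquiv
  map_one' := rfl
  map_mul' f g := Equiv.ext fun _ => rfl

/-- The orbit equivalence relation on `n`-tuples. -/
def orbRel (n : ℕ) (x y : Fin n → M) : Prop := ∃ g : M ≃[L] M, ∀ i, g (x i) = y i

/-- The automorphism group of the orbital structure `E_M`: permutations of `M`
preserving each orbit equivalence relation. -/
def autOrbital : Subgroup (Equiv.Perm M) where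
  carrier := {f | ∀ (n : ℕ) (x y : Fin n → M),
    orbRel L M n x y ↔ orbRel L M n (f ∘ x) (f ∘ y)}
  one_mem' := by intro n x y; simp [Equiv.Perm.coe_one]
  mul_mem' := by
    intro f g hf hg n x y
    exact (hg n x y).trans (hf n (g ∘ x) (g ∘ y))
  inv_mem' := by
    intro f hf n x y
    have := hf n (⇑(f⁻¹) ∘ x) (⇑(f⁻¹) ∘ y)
    have hx : ⇑f ∘ ⇑(f⁻¹) ∘ x = x := by funext i; simp
    have hy : ⇑f ∘ ⇑(f⁻¹) ∘ y = y := by funext i; simp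
    rw [hx, hy] at this
    exact this.symm

/-- `Aut°(E_M)`: automorphisms of the orbital structure preserving each orbit
equivalence class. -/
def autOrbitalFix : Subgroup (Equiv.Perm M) where
  carrier := {f | f ∈ autOrbital L M ∧ ∀ (n : ℕ) (x : Fin n → M), orbRel L M n x (f ∘ x)}
  one_mem' := ⟨(autOrbital L M).one_mem, fun n x => ⟨1, fun i => by simp [Equiv.Perm.coe_one]⟩⟩
  mul_mem' := by
    rintro f g ⟨hf, hf2⟩ ⟨hg, hg2⟩
    refine ⟨(autOrbital L M).mul_mem hf hg, fun n x => ?_⟩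
    obtain ⟨a, ha⟩ := hg2 n x
    obtain ⟨b, hb⟩ := hf2 n (g ∘ x)
    exact ⟨b * a, fun i => by rw [aut_mul_apply, ha i, hb i]; rfl⟩
  inv_mem' := by
    rintro f ⟨hf, hf2⟩
    refine ⟨(autOrbital L M).inv_mem hf, fun n x => ?_⟩
    obtain ⟨a, ha⟩ := hf2 n (⇑(f⁻¹) ∘ x)
    refine ⟨a⁻¹, fun i => ?_⟩
    have hi := ha i
    simp only [Function.comp_apply, Equiv.Perm.coe_inv, Equiv.apply_symm_apply] at hi
    rw [← hi, aut_inv_apply, FirstOrder.Language.Equiv.symm_apply_apply]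
    rfl

/-- A homogeneous structure: isomorphisms between finite substructures extend to
automorphisms. -/
def Homogeneous : Prop :=
  ∀ (K K' : Set M), K.Finite → K'.Finite → ∀ p : K ≃ K',
    IsPartialIso L M K K' p → ∃ g : M ≃[L] M, ∀ a : K, g a = (p a : M)

/-- Weak elimination of imaginaries, phrased group-theoretically: every open subgroup is
sandwiched between the pointwise and setwise stabilizers of a unique smallest finite
Galois-algebraically closed set. -/
def HasWEI : Prop :=
  ∀ H : Subgroup (M ≃[L] M), IsOpen (H : Set (M ≃[L] M)) →
    ∃ K : Set M, (K.Finite ∧ aclg L M K = K ∧ pstab L M K ≤ H ∧ H ≤ sstab L M K) ∧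
      ∀ K' : Set M, (K'.Finite ∧ aclg L M K' = K' ∧ pstab L M K' ≤ H ∧ H ≤ sstab L M K') →
        K ⊆ K'

/-- No algebraicity: every finite set is Galois-algebraically closed. -/
def NoAlgebraicity : Prop := ∀ A : Set M, A.Finite → aclg L M A = A

/-- The small index property: every subgroup of index `< 2^ℵ₀` is open. -/
def SIP : Prop :=
  ∀ H : Subgroup (M ≃[L] M), Cardinal.mk ((M ≃[L] M) ⧸ H) < Cardinal.continuum →
    IsOpen (H : Set (M ≃[L] M))

/-- An oligomorphic action: finitely many orbits on `n`-tuples for every `n`. -/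
def Oligo (G : Type*) [Group G] (X : Type*) [MulAction G X] : Prop :=
  ∀ n : ℕ, Finite (MulAction.orbitRel.Quotient G (Fin n → X))

end Paper

namespace Paper

/-- ω-categoricity: `M` is, up to isomorphism, the unique countable model of its complete
first-order theory. -/
def IsOmegaCategorical (L : FirstOrder.Language) (M : Type w) [L.Structure M] : Prop :=
  Countable M ∧ ∀ (N : Type w) (iN : L.Structure N), Countable N → Nonempty N →
    (@FirstOrder.Language.Theory.Model L N iN (L.completeTheory M)) →
      Nonempty (@FirstOrder.Language.Equiv L N M iN _)

section Helpers

variable {L : FirstOrder.Language} {M : Type*} [L.Structure M]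

theorem mem_pstab {A : Set M} {g : M ≃[L] M} : g ∈ pstab L M A ↔ ∀ a ∈ A, g a = a := Iff.rfl

theorem mem_genStab {K : Set M} {Lsub : Subgroup (Equiv.Perm K)} {f : M ≃[L] M} :
    f ∈ genStab L M K Lsub ↔ ∃ p ∈ Lsub, ∀ a : K, f a = (p a : M) := Iff.rfl

theorem smul_eq_apply {A : Set M} (g : ↥(pstab L M A)) (b : M) :
    g • b = (g : M ≃[L] M) b := rfl

theorem subset_aclg (A : Set M) : A ⊆ aclg L M A := by
  intro a ha
  have hsub : MulAction.orbit (pstab L M A) a ⊆ {a} := by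
    rintro x ⟨g, rfl⟩
    exact g.2 a ha
  exact (Set.finite_singleton a).subset hsub

theorem pstab_le_sstab (A : Set M) : pstab L M A ≤ sstab L M A := by
  intro g hg
  show ⇑g '' A = A
  ext x
  constructor
  · rintro ⟨a, ha, rfl⟩
    rwa [hg a ha]
  · intro hx
    exact ⟨x, hx, hg x hx⟩

theorem isOpen_pstab {A : Set M} (hA : A.Finite) :
    IsOpen ((pstab L M A : Set (M ≃[L] M))) := by
  letI : TopologicalSpace M := ⊥
  haveI : DiscreteTopology M := ⟨rfl⟩
  have h : (pstab L M A : Set (M ≃[L] M)) =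
      (fun g : M ≃[L] M => (g : M → M)) ⁻¹'
        (⋂ a ∈ A, (fun f : M → M => f a) ⁻¹' {a}) := by
    ext g
    simp only [Set.mem_preimage, Set.mem_iInter, Set.mem_singleton_iff]
    exact Iff.rfl
  rw [h]
  exact isOpen_induced (hA.isOpen_biInter fun a _ =>
    (continuous_apply a).isOpen_preimage _ (isOpen_discrete {a}))

theorem mem_pstab_image {A : Set M} {f g : M ≃[L] M} :
    g ∈ pstab L M (⇑f '' A) ↔ f⁻¹ * g * f ∈ pstab L M A := by
  constructor
  · intro hg a ha
    have h1 : g (f a) = f a := hg (f a) ⟨a, ha, rfl⟩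
    show (f⁻¹ * g * f) a = a
    rw [aut_mul_apply, aut_mul_apply, h1, aut_inv_apply, f.symm_apply_apply]
  · rintro hg _ ⟨a, ha, rfl⟩
    have h1 : (f⁻¹ * g * f) a = a := hg a ha
    rw [aut_mul_apply, aut_mul_apply, aut_inv_apply] at h1
    calc g (f a) = f (f.symm (g (f a))) := (f.apply_symm_apply _).symm
    _ = f a := by rw [h1]

theorem mem_pstab_image' {A : Set M} {f g : M ≃[L] M} :
    f * g * f⁻¹ ∈ pstab L M (⇑f '' A) ↔ g ∈ pstab L M A := by
  rw [mem_pstab_image]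
  constructor
  · intro hg
    have : f⁻¹ * (f * g * f⁻¹) * f = g := by group
    rwa [this] at hg
  · intro hg
    have : f⁻¹ * (f * g * f⁻¹) * f = g := by group
    rwa [this]

theorem orbit_pstab_image (f : M ≃[L] M) (A : Set M) (b : M) :
    MulAction.orbit (pstab L M (⇑f '' A)) b =
      ⇑f '' MulAction.orbit (pstab L M A) (f.symm b) := by
  ext x
  constructor
  · rintro ⟨g, rfl⟩
    refine ⟨(f⁻¹ * (g : M ≃[L] M) * f) (f.symm b), ⟨⟨_, mem_pstab_image.mp g.2⟩, rfl⟩, ?_⟩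
    show f ((f⁻¹ * (g : M ≃[L] M) * f) (f.symm b)) = (g : M ≃[L] M) b
    rw [aut_mul_apply, aut_mul_apply, f.apply_symm_apply, aut_inv_apply, f.apply_symm_apply]
  · rintro ⟨_, ⟨g, rfl⟩, rfl⟩
    refine ⟨⟨f * (g : M ≃[L] M) * f⁻¹, mem_pstab_image'.mpr g.2⟩, ?_⟩
    simp only [smul_eq_apply]
    rw [aut_mul_apply, aut_mul_apply, aut_inv_apply]

theorem aclg_image (f : M ≃[L] M) (A : Set M) :
    aclg L M (⇑f '' A) = ⇑f '' aclg L M A := by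
  ext b
  show (MulAction.orbit (pstab L M (⇑f '' A)) b).Finite ↔ _
  rw [orbit_pstab_image]
  constructor
  · intro hfin
    refine ⟨f.symm b, ?_, f.apply_symm_apply b⟩
    show (MulAction.orbit (pstab L M A) (f.symm b)).Finite
    exact Set.Finite.of_finite_image hfin (f.injective.injOn)
  · rintro ⟨a, ha, rfl⟩
    have : f.symm (f a) = a := f.symm_apply_apply a
    rw [this]
    exact Set.Finite.image _ ha

theorem aclg_idem (A : Set M) (hfin : (aclg L M A).Finite) :
    aclg L M (aclg L M A) = aclg L M A := by
  apply Set.Subset.antisymm _ (subset_aclg _)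
  intro b hb
  have hb' : (MulAction.orbit (pstab L M (aclg L M A)) b).Finite := hb
  haveI : Finite ↥(aclg L M A) := hfin.to_subtype
  have hstabFI : ∀ a : ↥(aclg L M A),
      (MulAction.stabilizer (pstab L M A) (a : M)).FiniteIndex := by
    intro a
    have horb : (MulAction.orbit (pstab L M A) (a : M)).Finite := a.2
    haveI : Finite ↥(MulAction.orbit (pstab L M A) (a : M)) := horb.to_subtype
    haveI : Finite (↥(pstab L M A) ⧸ MulAction.stabilizer ↥(pstab L M A) (a : M)) :=
      Finite.of_equiv _ (MulAction.orbitEquivQuotientStabilizer ↥(pstab L M A) (a : M))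
    exact Subgroup.finiteIndex_of_finite_quotient
  set N : Subgroup (pstab L M A) :=
    ⨅ a : ↥(aclg L M A), MulAction.stabilizer (pstab L M A) (a : M) with hN
  haveI : N.FiniteIndex := Subgroup.finiteIndex_iInf hstabFI
  haveI : Finite ((pstab L M A) ⧸ N) := Subgroup.finite_quotient_of_finiteIndex
  show (MulAction.orbit (pstab L M A) b).Finite
  have hcover : MulAction.orbit (pstab L M A) b ⊆
      ⋃ c : (pstab L M A) ⧸ N, ((Quotient.out c : pstab L M A) : M ≃[L] M) ''
        (MulAction.orbit (pstab L M (aclg L M A)) b) := by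
    rintro x ⟨g, rfl⟩
    set c : (pstab L M A) ⧸ N := QuotientGroup.mk g with hc
    set r : ↥(pstab L M A) := Quotient.out c with hr
    have hout : (QuotientGroup.mk r : (pstab L M A) ⧸ N) = QuotientGroup.mk g :=
      QuotientGroup.out_eq' c
    have hmem : r⁻¹ * g ∈ N := QuotientGroup.eq.mp hout
    have hQ : ((r⁻¹ * g : ↥(pstab L M A)) : M ≃[L] M) ∈ pstab L M (aclg L M A) := by
      intro a ha
      have h2 := Subgroup.mem_iInf.mp hmem ⟨a, ha⟩
      exact h2
    refine Set.mem_iUnion.mpr ⟨c, ((r⁻¹ * g : ↥(pstab L M A)) : M ≃[L] M) b,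
      ⟨⟨_, hQ⟩, rfl⟩, ?_⟩
    show (r : M ≃[L] M) (((r : M ≃[L] M)⁻¹ * (g : M ≃[L] M)) b) = (g : M ≃[L] M) b
    rw [aut_mul_apply, aut_inv_apply, FirstOrder.Language.Equiv.apply_symm_apply]
  exact Set.Finite.subset (Set.finite_iUnion fun c => hb'.image _) hcover

theorem mem_AA_finite_closed {K : Set M} (h : HypH L M) (hK : K ∈ AA L M) :
    K.Finite ∧ aclg L M K = K := by
  obtain ⟨A, hA, rfl⟩ := hK
  exact ⟨h.locallyFinite A hA, aclg_idem A (h.locallyFinite A hA)⟩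

end Helpers

section Helpers2

variable {L : FirstOrder.Language} {M : Type*} [L.Structure M]

theorem funMap_mem {K : Set M} (hKcl : aclg L M K = K) {n : ℕ}
    (F : L.Functions n) (x : Fin n → K) :
    FirstOrder.Language.Structure.funMap F (fun i => (x i : M)) ∈ K := by
  have hsub : MulAction.orbit (pstab L M K)
      (FirstOrder.Language.Structure.funMap F (fun i => (x i : M))) ⊆
      {FirstOrder.Language.Structure.funMap F (fun i => (x i : M))} := by
    rintro _ ⟨g, rfl⟩
    show (g : M ≃[L] M) (FirstOrder.Language.Structure.funMap F (fun i => (x i : M))) =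
      FirstOrder.Language.Structure.funMap F (fun i => (x i : M))
    rw [FirstOrder.Language.StrongHomClass.map_fun]
    congr 1
    funext i
    exact g.2 _ (x i).2
  have hmem : FirstOrder.Language.Structure.funMap F (fun i => (x i : M)) ∈ aclg L M K :=
    Set.Finite.subset (Set.finite_singleton _) hsub
  rwa [hKcl] at hmem

/-- The permutation of `K` induced by an automorphism preserving `K` setwise. -/
def permOfImageEq {K : Set M} (f : M ≃[L] M) (hf : ⇑f '' K = K) : Equiv.Perm K where
  toFun a := ⟨f a, by
    have ha : f a ∈ ⇑f '' K := ⟨a, a.2, rfl⟩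
    rwa [hf] at ha⟩
  invFun a := ⟨f.symm a, by
    have ha : (a : M) ∈ ⇑f '' K := by rw [hf]; exact a.2
    obtain ⟨b, hb, hfb⟩ := ha
    rw [← hfb, f.symm_apply_apply]; exact hb⟩
  left_inv a := Subtype.ext (f.symm_apply_apply a)
  right_inv a := Subtype.ext (f.apply_symm_apply a)

theorem isPartialIso_permOfImageEq {K : Set M} (hKcl : aclg L M K = K) (f : M ≃[L] M)
    (hf : ⇑f '' K = K) : IsPartialIso L M K K (permOfImageEq f hf : K ≃ K) := by
  constructor
  · intro n F x
    refine ⟨funMap_mem hKcl F x, ?_⟩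
    show f (FirstOrder.Language.Structure.funMap F fun i => (x i : M)) =
      FirstOrder.Language.Structure.funMap F fun i => ((permOfImageEq f hf (x i) : K) : M)
    rw [FirstOrder.Language.StrongHomClass.map_fun]
    rfl
  · intro n r x
    have h1 := FirstOrder.Language.StrongHomClass.map_rel f r (fun i => (x i : M))
    exact h1.symm

theorem mem_autK_closure {K : Set M} (hKcl : aclg L M K = K) :
    True := trivial

/-- The full automorphism group of the induced structure on `K`. -/
def autK {K : Set M} (hKcl : aclg L M K = K) : Subgroup (Equiv.Perm K) where
  carrier := {p | IsPartialIso L M K K (p : K ≃ K)}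
  one_mem' := by
    constructor
    · intro n F x
      exact ⟨funMap_mem hKcl F x, rfl⟩
    · intro n r x
      exact Iff.rfl
  mul_mem' := by
    intro p q hp hq
    constructor
    · intro n F x
      refine ⟨funMap_mem hKcl F x, ?_⟩
      obtain ⟨h1, e1⟩ := hq.1 F x
      obtain ⟨h2, e2⟩ := hp.1 F (fun i => q (x i))
      have hq' : q ⟨FirstOrder.Language.Structure.funMap F fun i => (x i : M),
            funMap_mem hKcl F x⟩ =
          ⟨FirstOrder.Language.Structure.funMap F fun i => ((q (x i) : K) : M),
            funMap_mem hKcl F (fun i => q (x i))⟩ :=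
        Subtype.ext e1
      show (p (q ⟨FirstOrder.Language.Structure.funMap F fun i => (x i : M),
          funMap_mem hKcl F x⟩) : M) =
        FirstOrder.Language.Structure.funMap F fun i => ((p (q (x i)) : K) : M)
      rw [hq']
      exact e2
    · intro n r x
      exact (hq.2 r x).trans (hp.2 r (fun i => q (x i)))
  inv_mem' := by
    intro p hp
    constructor
    · intro n F x
      refine ⟨funMap_mem hKcl F x, ?_⟩
      obtain ⟨h1, e1⟩ := hp.1 F (fun i => p⁻¹ (x i))
      have h3 : p ⟨FirstOrder.Language.Structure.funMap F
            fun i => ((p⁻¹ (x i) : K) : M), h1⟩ =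
          ⟨FirstOrder.Language.Structure.funMap F fun i => (x i : M),
            funMap_mem hKcl F x⟩ := by
        apply Subtype.ext
        rw [e1]
        show FirstOrder.Language.Structure.funMap F (fun i => ((p (p⁻¹ (x i)) : K) : M)) = _
        congr 1
        funext i
        rw [← Equiv.Perm.mul_apply, mul_inv_cancel, Equiv.Perm.one_apply]
      have h2 := congrArg (⇑p⁻¹) h3
      rw [← Equiv.Perm.mul_apply, inv_mul_cancel, Equiv.Perm.one_apply] at h2
      rw [← h2]
    · intro n r x
      have h1 := hp.2 r (fun i => p⁻¹ (x i))
      simp only [Equiv.Perm.coe_inv, Equiv.apply_symm_apply] at h1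
      exact h1.symm

theorem mem_autK {K : Set M} {hKcl : aclg L M K = K} {p : Equiv.Perm K} :
    p ∈ autK hKcl ↔ IsPartialIso L M K K (p : K ≃ K) := Iff.rfl

theorem pstab_le_genStab {K : Set M} {Lsub : Subgroup (Equiv.Perm K)} :
    pstab L M K ≤ genStab L M K Lsub := by
  intro f hf
  exact ⟨1, Lsub.one_mem, fun a => hf a a.2⟩

/-- The restriction of an element of a generalized stabilizer to `K`. -/
noncomputable def restr {K : Set M} {Lsub : Subgroup (Equiv.Perm K)}
    (f : ↥(genStab L M K Lsub)) : Equiv.Perm K := f.2.choose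

theorem restr_mem {K : Set M} {Lsub : Subgroup (Equiv.Perm K)}
    (f : ↥(genStab L M K Lsub)) : restr f ∈ Lsub := f.2.choose_spec.1

theorem restr_spec {K : Set M} {Lsub : Subgroup (Equiv.Perm K)}
    (f : ↥(genStab L M K Lsub)) (a : K) :
    (f : M ≃[L] M) a = ((restr f) a : M) := f.2.choose_spec.2 a

theorem restr_eq {K : Set M} {Lsub : Subgroup (Equiv.Perm K)}
    (f : ↥(genStab L M K Lsub)) (p : Equiv.Perm K)
    (hp : ∀ a : K, (f : M ≃[L] M) a = (p a : M)) : restr f = p := by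
  apply Equiv.ext
  intro a
  apply Subtype.ext
  rw [← restr_spec f a]
  exact hp a

/-- Restriction to `K` as a group homomorphism. -/
noncomputable def restrHom (K : Set M) (Lsub : Subgroup (Equiv.Perm K)) :
    ↥(genStab L M K Lsub) →* Equiv.Perm K :=
  MonoidHom.mk' (fun f => restr f) (by
    intro f g
    apply restr_eq
    intro a
    show ((f : M ≃[L] M) * (g : M ≃[L] M)) a = ((restr f) ((restr g) a) : M)
    rw [aut_mul_apply, restr_spec g a, restr_spec f (restr g a)])

theorem restrHom_apply (K : Set M) (Lsub : Subgroup (Equiv.Perm K))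
    (f : ↥(genStab L M K Lsub)) : restrHom K Lsub f = restr f := rfl

theorem restrHom_ker (K : Set M) (Lsub : Subgroup (Equiv.Perm K)) :
    (restrHom K Lsub).ker = (pstab L M K).subgroupOf (genStab L M K Lsub) := by
  ext f
  rw [MonoidHom.mem_ker, Subgroup.mem_subgroupOf, restrHom_apply]
  constructor
  · intro hf a ha
    have h1 := restr_spec f ⟨a, ha⟩
    rw [hf] at h1
    exact h1
  · intro hf
    apply restr_eq
    intro a
    exact hf a a.2

theorem restr_surjOn (h : HypH L M) {K : Set M} (hKfin : K.Finite) (hKcl : aclg L M K = K)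
    {Lsub : Subgroup (Equiv.Perm K)} (hiso : ∀ p ∈ Lsub, IsPartialIso L M K K (p : K ≃ K))
    (p : Equiv.Perm K) (hp : p ∈ Lsub) :
    ∃ f : ↥(genStab L M K Lsub), restr f = p := by
  obtain ⟨g, hg⟩ := h.extendsIso K K hKfin hKfin hKcl hKcl (p : K ≃ K) (hiso p hp)
  exact ⟨⟨g, ⟨p, hp, hg⟩⟩, restr_eq _ p hg⟩

theorem image_eq_of_conj (h : HypH L M) {K : Set M} (hKfin : K.Finite) (hKcl : aclg L M K = K)
    {f : M ≃[L] M} (hconj : ∀ g, f * g * f⁻¹ ∈ pstab L M K ↔ g ∈ pstab L M K) :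
    ⇑f '' K = K := by
  obtain ⟨K₁, hK₁, huniq⟩ := h.openSandwich (pstab L M K) (isOpen_pstab hKfin)
  have hKK : K = K₁ := huniq K ⟨hKfin, hKcl, le_refl _, pstab_le_sstab K⟩
  have hpeq : pstab L M (⇑f '' K) = pstab L M K := by
    ext g
    rw [mem_pstab_image]
    have h3 : f * (f⁻¹ * g * f) * f⁻¹ = g := by group
    have h4 := hconj (f⁻¹ * g * f)
    rw [h3] at h4
    exact h4.symm
  have himg : ⇑f '' K = K₁ := by
    apply huniq
    refine ⟨hKfin.image _, ?_, ?_, ?_⟩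
    · rw [aclg_image, hKcl]
    · rw [hpeq]
    · intro g hg
      exact pstab_le_sstab (⇑f '' K) (by rw [hpeq]; exact hg)
  rw [himg, ← hKK]

theorem le_genStab_autK (h : HypH L M) {K : Set M} (hKfin : K.Finite) (hKcl : aclg L M K = K)
    {H'' : Subgroup (M ≃[L] M)} (hle : pstab L M K ≤ H'')
    (hn : ((pstab L M K).subgroupOf H'').Normal) :
    H'' ≤ genStab L M K (autK hKcl) := by
  intro f hf
  have hconj : ∀ g, f * g * f⁻¹ ∈ pstab L M K ↔ g ∈ pstab L M K := by
    intro g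
    constructor
    · intro hg
      have h1 : (⟨f * g * f⁻¹, hle hg⟩ : ↥H'') ∈ (pstab L M K).subgroupOf H'' :=
        Subgroup.mem_subgroupOf.mpr hg
      have h2 := hn.conj_mem _ h1 (⟨f, hf⟩ : ↥H'')⁻¹
      rw [Subgroup.mem_subgroupOf] at h2
      have h2' : f⁻¹ * (f * g * f⁻¹) * f⁻¹⁻¹ ∈ pstab L M K := h2
      have h3 : f⁻¹ * (f * g * f⁻¹) * f⁻¹⁻¹ = g := by group
      rwa [h3] at h2'
    · intro hg
      have h1 : (⟨g, hle hg⟩ : ↥H'') ∈ (pstab L M K).subgroupOf H'' :=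
        Subgroup.mem_subgroupOf.mpr hg
      have h2 := hn.conj_mem _ h1 (⟨f, hf⟩ : ↥H'')
      rw [Subgroup.mem_subgroupOf] at h2
      exact h2
  have himg := image_eq_of_conj h hKfin hKcl hconj
  exact ⟨permOfImageEq f himg, isPartialIso_permOfImageEq hKcl f himg, fun a => rfl⟩

end Helpers2

section Main

variable {L : FirstOrder.Language} {M : Type*} [L.Structure M]

theorem subgroupOf_normal (K : Set M) (Lsub : Subgroup (Equiv.Perm K)) :
    ((pstab L M K).subgroupOf (genStab L M K Lsub)).Normal := by
  rw [← restrHom_ker]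
  exact MonoidHom.normal_ker _

theorem relindex_ne_zero {K : Set M} (hKfin : K.Finite) (Lsub : Subgroup (Equiv.Perm K)) :
    (pstab L M K).relIndex (genStab L M K Lsub) ≠ 0 := by
  have h1 : (pstab L M K).relIndex (genStab L M K Lsub) =
      ((pstab L M K).subgroupOf (genStab L M K Lsub)).index := rfl
  rw [h1, ← restrHom_ker, Subgroup.index_ker]
  haveI : Finite ↥K := hKfin.to_subtype
  exact Nat.card_pos.ne'

end Main




/-- Under Hypothesis (H), for a finite group `L₀` and `H ∈ PS(M)`:
`H = G_(K)` with `Aut(K) ≅ L₀` iff there is `H' ∈ GS(M)` with `H ⊴ H'`, `[H' : H] < ω`,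
`H'` maximal in `GS(M)` under these conditions, and `H'/H ≅ L₀`. -/
theorem stmt_13 (L : FirstOrder.Language) (M : Type*) [L.Structure M] (h : HypH L M)
    (L₀ : Type*) [Group L₀] [Finite L₀]
    (H : Subgroup (M ≃[L] M)) (hH : H ∈ PS L M) :
    (∃ K ∈ AA L M, H = pstab L M K ∧
      ∃ e : L₀ →* Equiv.Perm K, Function.Injective e ∧
        (e.range : Set (Equiv.Perm K)) =
          {p : Equiv.Perm K | IsPartialIso L M K K (p : K ≃ K)}) ↔
    (∃ H' ∈ GS L M, H ≤ H' ∧ (H.subgroupOf H').Normal ∧ H.relIndex H' ≠ 0 ∧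
      (∀ H'' ∈ GS L M, H ≤ H'' → (H.subgroupOf H'').Normal → H.relIndex H'' ≠ 0 →
        H' ≤ H'' → H'' = H') ∧
      ∃ ψ : ↥H' →* L₀, Function.Surjective ψ ∧ ψ.ker = H.subgroupOf H') := by
  obtain ⟨K₀, hK₀AA, hHK₀⟩ := hH
  obtain ⟨hK₀fin, hK₀cl⟩ := mem_AA_finite_closed h hK₀AA
  constructor
  · rintro ⟨K, hKAA, hHK, e, he_inj, he_range⟩
    obtain ⟨hKfin, hKcl⟩ := mem_AA_finite_closed h hKAA
    have hLeq : autK hKcl = e.range := by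
      apply SetLike.ext'
      rw [he_range]
      rfl
    refine ⟨genStab L M K (autK hKcl), ⟨K, hKAA, autK hKcl, fun p hp => hp, rfl⟩,
      ?_, ?_, ?_, ?_, ?_⟩
    · rw [hHK]; exact pstab_le_genStab
    · rw [hHK]; exact subgroupOf_normal K (autK hKcl)
    · rw [hHK]; exact relindex_ne_zero hKfin (autK hKcl)
    · intro H'' hGS hle hnorm hrel hle'
      apply le_antisymm _ hle'
      rw [hHK] at hle hnorm
      exact le_genStab_autK h hKfin hKcl hle hnorm
    · set Hm := genStab L M K (autK hKcl) with hHmdef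
      have hmem : ∀ f : ↥Hm, restrHom K (autK hKcl) f ∈ e.range := by
        intro f
        rw [← hLeq]
        exact restr_mem f
      let ρ' : ↥Hm →* ↥e.range := (restrHom K (autK hKcl)).codRestrict e.range hmem
      let ψ : ↥Hm →* L₀ := ((MonoidHom.ofInjective he_inj).symm.toMonoidHom).comp ρ'
      refine ⟨ψ, ?_, ?_⟩
      · intro l
        obtain ⟨f, hf⟩ := restr_surjOn h hKfin hKcl (Lsub := autK hKcl) (fun p hp => hp) (e l)
          (by rw [hLeq]; exact ⟨l, rfl⟩)
        refine ⟨f, ?_⟩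
        have h2 : ρ' f = MonoidHom.ofInjective he_inj l := by
          apply Subtype.ext
          rw [MonoidHom.ofInjective_apply]
          exact hf
        show (MonoidHom.ofInjective he_inj).symm (ρ' f) = l
        rw [h2, MulEquiv.symm_apply_apply]
      · ext f
        have h1 : (ψ f = 1) ↔ ρ' f = 1 := by
          show ((MonoidHom.ofInjective he_inj).symm (ρ' f) = 1) ↔ _
          rw [MulEquiv.symm_apply_eq, map_one]
        have h2 : (ρ' f = 1) ↔ restr f = 1 :=
          ⟨fun hf => congrArg Subtype.val hf, fun hf => Subtype.ext hf⟩
        rw [MonoidHom.mem_ker, h1, h2, hHK, ← restrHom_ker K (autK hKcl),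
          MonoidHom.mem_ker, restrHom_apply]
  · rintro ⟨H', hH'GS, hle, hnorm, hrel, hmax, ψ, hψsurj, hψker⟩
    subst hHK₀
    set Hm := genStab L M K₀ (autK hK₀cl) with hHmdef
    have hH'le : H' ≤ Hm := le_genStab_autK h hK₀fin hK₀cl hle hnorm
    have hHmGS : Hm ∈ GS L M := ⟨K₀, hK₀AA, autK hK₀cl, fun p hp => hp, rfl⟩
    have heq : Hm = H' := hmax Hm hHmGS pstab_le_genStab (subgroupOf_normal K₀ (autK hK₀cl))
      (relindex_ne_zero hK₀fin (autK hK₀cl)) hH'le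
    refine ⟨K₀, hK₀AA, rfl, ?_⟩
    set ρ := restrHom (L := L) K₀ (autK hK₀cl) with hρdef
    let ψ' : ↥Hm →* L₀ := ψ.comp (MulEquiv.subgroupCongr heq).toMonoidHom
    have hψ'surj : Function.Surjective ψ' := hψsurj.comp (MulEquiv.surjective _)
    have hkk : ψ'.ker = ρ.ker := by
      rw [hρdef, restrHom_ker]
      ext f
      rw [MonoidHom.mem_ker, Subgroup.mem_subgroupOf]
      have h1 : ψ' f = ψ (MulEquiv.subgroupCongr heq f) := rfl
      rw [h1, ← MonoidHom.mem_ker (f := ψ), hψker, Subgroup.mem_subgroupOf,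
        MulEquiv.subgroupCongr_apply]
    haveI : ψ'.ker.Normal := MonoidHom.normal_ker ψ'
    haveI : ρ.ker.Normal := MonoidHom.normal_ker ρ
    let e₀ : L₀ ≃* (↥Hm ⧸ ψ'.ker) := (QuotientGroup.quotientKerEquivOfSurjective ψ' hψ'surj).symm
    let e₁ : (↥Hm ⧸ ψ'.ker) ≃* (↥Hm ⧸ ρ.ker) := QuotientGroup.quotientMulEquivOfEq hkk
    let e : L₀ →* Equiv.Perm K₀ :=
      (QuotientGroup.kerLift ρ).comp (e₁.toMonoidHom.comp e₀.toMonoidHom)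
    refine ⟨e, ?_, ?_⟩
    · exact (QuotientGroup.kerLift_injective ρ).comp (e₁.injective.comp e₀.injective)
    · have hrange : e.range = ρ.range := by
        apply le_antisymm
        · rintro _ ⟨l, rfl⟩
          obtain ⟨q, hq⟩ := QuotientGroup.mk_surjective (e₁ (e₀ l))
          refine ⟨q, ?_⟩
          have h5 : e l = QuotientGroup.kerLift ρ (e₁ (e₀ l)) := rfl
          rw [h5, ← hq, QuotientGroup.kerLift_mk]
        · rintro _ ⟨f, rfl⟩
          refine ⟨ψ' f, ?_⟩
          have h0 : e₀ (ψ' f) = QuotientGroup.mk f := by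
            rw [MulEquiv.symm_apply_eq]
            rfl
          have h5 : e (ψ' f) = QuotientGroup.kerLift ρ (e₁ (e₀ (ψ' f))) := rfl
          rw [h5, h0, QuotientGroup.quotientMulEquivOfEq_mk, QuotientGroup.kerLift_mk]
      have hrange2 : ρ.range = autK hK₀cl := by
        apply le_antisymm
        · rintro _ ⟨f, rfl⟩
          exact restr_mem f
        · intro p hp
          obtain ⟨f, hf⟩ := restr_surjOn h hK₀fin hK₀cl (fun q hq => hq) p hp
          exact ⟨f, hf⟩
      rw [hrange, hrange2]
      rfl


end Paper
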